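/- Let n ≥ 2 and let π be a partition of {2,...,n} in which n and n-1 lie in the same block B₁, say π = {B₁,...,B_k}. For a labelled tree T on [n] with φ(T) = π, the vertices n and n-1 are adjacent in T, and contracting the edge {n-1, n} (deleting label n) yields a tree T̃ on [n-1] with φ(T̃) equal either to {B₁∖{n}, B₂,...,B_k} or to {B₁ ∪ B_j ∖ {n}, and the remaining blocks B_i (i ≠ 1, j)} for some 2 ≤ j ≤ k; this contraction map is a bijection from φ⁻¹(π) onto the disjoint union of the preimages φ⁻¹(π̃_j), j = 1,...,k, where π̃_1 = {B₁∖{n}, B₂,...,B_k} and π̃_j = {B₁ ∪ B_j ∖{n}} ∪ {B_i : i ≠ 1, j} for j ≥ 2. -/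

import Mathlib

open Finset Nat

/-- A labelled tree on `[n] = {1,…,n}` encoded by its parent function when rooted at `1`:
`p v` is the parent of `v` for each non-root vertex `2 ≤ v ≤ n` (so the edges of the tree
are exactly `{v, p v}` for `2 ≤ v ≤ n`), and `p` is the identity elsewhere. -/
def IsLabelledTree (n : ℕ) (p : ℕ → ℕ) : Prop :=
  (∀ v, 2 ≤ v → v ≤ n → 1 ≤ p v ∧ p v ≤ n ∧ p v ≠ v) ∧
  (∀ v, 2 ≤ v → v ≤ n → ∃ k, p^[k] v = 1) ∧
  (∀ v, ¬ (2 ≤ v ∧ v ≤ n) → p v = v)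

/-- With every edge `{i,j}`, `i < j`, oriented `i → j`, the head of the edge labelled `v`
(the edge `{v, p v}`) is its larger endpoint. -/
def head (p : ℕ → ℕ) (v : ℕ) : ℕ := max v (p v)

/-- The indegree of vertex `u`: the number of edges oriented into `u`. -/
def indeg (n : ℕ) (p : ℕ → ℕ) (u : ℕ) : ℕ :=
  ((Finset.Icc 2 n).filter fun v => head p v = u).card

/-- `phiEq n p π` says that `π` is the partition `φ(T)` of `{2,…,n}` associated to the tree
with parent function `p`: two edge labels lie in a common block iff the corresponding
edges point into the same vertex. -/
def phiEq (n : ℕ) (p : ℕ → ℕ) (π : Finpartition (Finset.Icc 2 n)) : Prop :=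
  ∀ v ∈ Finset.Icc 2 n, ∀ w ∈ Finset.Icc 2 n,
    ((∃ b ∈ π.parts, v ∈ b ∧ w ∈ b) ↔ head p v = head p w)

/-- Contraction of the edge `{n-1, n}` in a labelled tree on `[n]` (given by its parent
function `p`, where the vertex `n-1` has parent `n`): the merged vertex is relabelled
`n-1`, it receives the old parent of `n`, and the old children of `n` become children of
`n-1`. -/
def contract (n : ℕ) (p : ℕ → ℕ) : ℕ → ℕ := fun v =>
  if 2 ≤ v ∧ v ≤ n - 1 then
    (if v = n - 1 then p n else if p v = n then n - 1 else p v)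
  else v

def expand (n : ℕ) (B₁ : Finset ℕ) (q : ℕ → ℕ) : ℕ → ℕ := fun v =>
  if 2 ≤ v ∧ v ≤ n then
    (if v = n then q (n-1) else if v = n-1 then n
     else if q v = n-1 ∧ v ∈ B₁ then n else q v)
  else v

lemma contract_eq_of {n : ℕ} {p : ℕ → ℕ} {v : ℕ} (h : 2 ≤ v) (h' : v ≤ n-1) :
    contract n p v = if v = n - 1 then p n else if p v = n then n - 1 else p v :=
  if_pos ⟨h, h'⟩

lemma contract_eq_self {n : ℕ} {p : ℕ → ℕ} {v : ℕ} (h : ¬ (2 ≤ v ∧ v ≤ n-1)) :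
    contract n p v = v := if_neg h

lemma expand_eq_of {n : ℕ} {B₁ : Finset ℕ} {q : ℕ → ℕ} {v : ℕ} (h : 2 ≤ v) (h' : v ≤ n) :
    expand n B₁ q v = if v = n then q (n-1) else if v = n-1 then n
      else if q v = n-1 ∧ v ∈ B₁ then n else q v := if_pos ⟨h, h'⟩

lemma expand_eq_self {n : ℕ} {B₁ : Finset ℕ} {q : ℕ → ℕ} {v : ℕ} (h : ¬ (2 ≤ v ∧ v ≤ n)) :
    expand n B₁ q v = v := if_neg h

/-- fibers of a phiEq partition. -/
lemma fib_of_phiEq {n : ℕ} {p : ℕ → ℕ} {π : Finpartition (Finset.Icc 2 n)}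
    (hφ : phiEq n p π) {b : Finset ℕ} (hb : b ∈ π.parts) {u : ℕ} (hu : u ∈ b)
    {v : ℕ} (hv : v ∈ Finset.Icc 2 n) : (v ∈ b ↔ head p v = head p u) := by
  have hub : u ∈ Finset.Icc 2 n := π.le hb hu
  constructor
  · intro hvb
    exact (hφ v hv u hub).1 ⟨b, hb, hvb, hu⟩
  · intro h
    obtain ⟨b', hb', hvb', hub'⟩ := (hφ v hv u hub).2 h
    rwa [π.eq_of_mem_parts hb' hb hub' hu] at hvb'

lemma head_n {n : ℕ} {p : ℕ → ℕ} (hn : 2 ≤ n) (ht : IsLabelledTree n p) :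
    head p n = n := by
  have := ht.1 n hn le_rfl
  simp only [head]; omega

lemma parent_n1 {n : ℕ} {p : ℕ → ℕ} {π : Finpartition (Finset.Icc 2 n)}
    {B₁ : Finset ℕ} (hB₁ : B₁ ∈ π.parts) (hnB : n ∈ B₁) (hn1B : n - 1 ∈ B₁)
    (hn : 3 ≤ n) (ht : IsLabelledTree n p) (hφ : phiEq n p π) : p (n - 1) = n := by
  have h1 : (n:ℕ) - 1 ∈ Finset.Icc 2 n := by simp [Finset.mem_Icc]; omega
  have h2 : (n:ℕ) ∈ Finset.Icc 2 n := by simp [Finset.mem_Icc]; omega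
  have h3 := (hφ (n-1) h1 n h2).1 ⟨B₁, hB₁, hn1B, hnB⟩
  rw [head_n (by omega) ht] at h3
  have := ht.1 (n-1) (by omega) (by omega)
  simp only [head] at h3; omega

lemma no2cycle {n : ℕ} {p : ℕ → ℕ} (hn : 3 ≤ n) (ht : IsLabelledTree n p)
    (h1 : p (n - 1) = n) : p n ≠ n - 1 := by
  intro h2
  obtain ⟨k, hk⟩ := ht.2.1 n (by omega) le_rfl
  have : ∀ j, p^[j] n = n ∨ p^[j] n = n - 1 := by
    intro j
    induction j with
    | zero => simp
    | succ j ih =>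
      rw [Function.iterate_succ_apply']
      rcases ih with h | h <;> rw [h]
      · right; exact h2
      · left; exact h1
  have := this k
  omega

lemma head_contract {n : ℕ} {p : ℕ → ℕ} (hn : 3 ≤ n)
    (ht : IsLabelledTree n p) (h1 : p (n - 1) = n) (h2 : p n ≠ n - 1)
    {v : ℕ} (hv2 : 2 ≤ v) (hv1 : v ≤ n - 1) :
    head (contract n p) v
      = if head p v = n then n - 1 else head p v := by
  have hpn := ht.1 n (by omega) le_rfl
  have hc := contract_eq_of (p := p) hv2 hv1
  by_cases hveq : v = n - 1
  · rw [if_pos hveq] at hc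
    subst hveq
    simp only [head, hc, h1]
    rw [if_pos (by omega)]
    omega
  · rw [if_neg hveq] at hc
    have hpv := ht.1 v hv2 (by omega)
    by_cases hpvn : p v = n
    · rw [if_pos hpvn] at hc
      simp only [head, hc, hpvn]
      rw [if_pos (by omega)]
      omega
    · rw [if_neg hpvn] at hc
      simp only [head, hc]
      exact (if_neg (show ¬ head p v = n by unfold head; omega)).symm

lemma contract_tree {n : ℕ} {p : ℕ → ℕ} (hn : 3 ≤ n) (ht : IsLabelledTree n p)
    (h1 : p (n - 1) = n) (h2 : p n ≠ n - 1) : IsLabelledTree (n - 1) (contract n p) := by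
  obtain ⟨hb, hr, hid⟩ := ht
  have hpn := hb n (by omega) le_rfl
  refine ⟨?_, ?_, fun v h => contract_eq_self h⟩
  · intro v h2v hv
    rw [contract_eq_of h2v hv]
    by_cases hveq : v = n - 1
    · rw [if_pos hveq]; omega
    · have hpv := hb v h2v (by omega)
      rw [if_neg hveq]
      by_cases hpvn : p v = n
      · rw [if_pos hpvn]; omega
      · rw [if_neg hpvn]; omega
  · have key : ∀ k, ∀ v, 2 ≤ v → v ≤ n - 1 → p^[k] v = 1 →
        ∃ m, (contract n p)^[m] v = 1 := by
      intro k
      induction k using Nat.strong_induction_on with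
      | _ k ih =>
        intro v hv2 hv1 hk
        match k with
        | 0 => simp at hk; omega
        | Nat.succ k =>
          rw [Function.iterate_succ_apply] at hk
          by_cases hveq : v = n - 1
          · have hpv : p v = n := by rw [hveq, h1]
            rw [hpv] at hk
            match k with
            | 0 => simp at hk; omega
            | Nat.succ k =>
              rw [Function.iterate_succ_apply] at hk
              have hqv : contract n p v = p n := by
                rw [contract_eq_of hv2 hv1, if_pos hveq]
              by_cases hpn1 : p n = 1
              · exact ⟨1, by simp [hqv, hpn1]⟩
              · obtain ⟨m, hm⟩ := ih k (by omega) (p n) (by omega) (by omega) hk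
                exact ⟨m + 1, by rw [Function.iterate_succ_apply, hqv]; exact hm⟩
          · have hpv := hb v hv2 (by omega)
            by_cases hpvn : p v = n
            · rw [hpvn] at hk
              have hqv : contract n p v = n - 1 := by
                rw [contract_eq_of hv2 hv1, if_neg hveq, if_pos hpvn]
              match k with
              | 0 => simp at hk; omega
              | Nat.succ k =>
                rw [Function.iterate_succ_apply] at hk
                have hqn1 : contract n p (n - 1) = p n := by
                  rw [contract_eq_of (by omega) le_rfl, if_pos rfl]
                by_cases hpn1 : p n = 1
                · exact ⟨2, by
                    rw [show (2:ℕ) = 1 + 1 from rfl, Function.iterate_succ_apply,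
                      Function.iterate_succ_apply, hqv, hqn1, hpn1]
                    simp⟩
                · obtain ⟨m, hm⟩ := ih k (by omega) (p n) (by omega) (by omega) hk
                  refine ⟨m + 2, ?_⟩
                  rw [show m + 2 = (m + 1) + 1 from rfl, Function.iterate_succ_apply, hqv,
                    Function.iterate_succ_apply, hqn1]
                  exact hm
            · have hqv : contract n p v = p v := by
                rw [contract_eq_of hv2 hv1, if_neg hveq, if_neg hpvn]
              by_cases hpv1 : p v = 1
              · exact ⟨1, by simp [hqv, hpv1]⟩
              · obtain ⟨m, hm⟩ := ih k (by omega) (p v) (by omega) (by omega) hk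
                exact ⟨m + 1, by rw [Function.iterate_succ_apply, hqv]; exact hm⟩
    intro v hv2 hv1
    obtain ⟨k, hk⟩ := hr v hv2 (by omega)
    exact key k v hv2 hv1 hk

lemma build {m : ℕ} (P : Finset (Finset ℕ)) (h : ℕ → ℕ)
    (hne : ∀ b ∈ P, b.Nonempty)
    (hsup : P.sup id = Finset.Icc 2 m)
    (hfib : ∀ b ∈ P, ∀ u ∈ b, ∀ v ∈ Finset.Icc 2 m, (v ∈ b ↔ h v = h u)) :
    ∃ ρ : Finpartition (Finset.Icc 2 m), ρ.parts = P := by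
  have hsub : ∀ b ∈ P, b ⊆ Finset.Icc 2 m := by
    intro b hb
    rw [← hsup]
    exact Finset.le_sup (f := id) hb
  refine ⟨⟨P, ?_, hsup, ?_⟩, rfl⟩
  · rw [Finset.supIndep_iff_pairwiseDisjoint]
    intro b hb b' hb' hne'
    simp only [Function.onFun, id]
    rw [Finset.disjoint_left]
    intro x hxb hxb'
    apply hne'
    apply Finset.Subset.antisymm <;> intro y hy
    · exact (hfib b' hb' x hxb' y (hsub b hb hy)).2 ((hfib b hb x hxb y (hsub b hb hy)).1 hy)
    · exact (hfib b hb x hxb y (hsub b' hb' hy)).2 ((hfib b' hb' x hxb' y (hsub b' hb' hy)).1 hy)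
  · intro hbot
    obtain ⟨x, hx⟩ := hne ⊥ hbot
    simp at hx

lemma phiEq_of_fib {m : ℕ} {q : ℕ → ℕ} {ρ : Finpartition (Finset.Icc 2 m)}
    (hfib : ∀ b ∈ ρ.parts, ∀ u ∈ b, ∀ v ∈ Finset.Icc 2 m, (v ∈ b ↔ head q v = head q u)) :
    phiEq m q ρ := by
  intro v hv w hw
  constructor
  · rintro ⟨b, hb, hvb, hwb⟩
    exact (hfib b hb w hwb v hv).1 hvb
  · intro h
    obtain ⟨b, hb, hvb⟩ := ρ.exists_mem hv
    exact ⟨b, hb, hvb, (hfib b hb v hvb w hw).2 h.symm⟩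

lemma expand_tree {n : ℕ} {B₁ : Finset ℕ} {q : ℕ → ℕ} (hn : 3 ≤ n)
    (ht : IsLabelledTree (n - 1) q) : IsLabelledTree n (expand n B₁ q) := by
  obtain ⟨hb, hr, hid⟩ := ht
  have hqn1 := hb (n - 1) (by omega) le_rfl
  refine ⟨?_, ?_, fun v h => expand_eq_self h⟩
  · intro v h2v hv
    rw [expand_eq_of h2v hv]
    by_cases hvn : v = n
    · rw [if_pos hvn]; omega
    · rw [if_neg hvn]
      by_cases hv1 : v = n - 1
      · rw [if_pos hv1]; omega
      · rw [if_neg hv1]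
        have hqv := hb v h2v (by omega)
        by_cases hc : q v = n - 1 ∧ v ∈ B₁
        · rw [if_pos hc]; omega
        · rw [if_neg hc]; omega
  · have key : ∀ k, ∀ v, 2 ≤ v → v ≤ n - 1 → q^[k] v = 1 →
        ∃ m, (expand n B₁ q)^[m] v = 1 := by
      intro k
      induction k using Nat.strong_induction_on with
      | _ k ih =>
        intro v hv2 hv1 hk
        match k with
        | 0 => simp at hk; omega
        | Nat.succ k =>
          rw [Function.iterate_succ_apply] at hk
          by_cases hveq : v = n - 1
          · -- p v = n, p n = q (n-1) = q v
            have hpv : expand n B₁ q v = n := by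
              rw [expand_eq_of hv2 (by omega), if_neg (by omega), if_pos hveq]
            have hpn : expand n B₁ q n = q (n - 1) := by
              rw [expand_eq_of (by omega) le_rfl, if_pos rfl]
            rw [hveq] at hk
            by_cases hq1 : q (n - 1) = 1
            · refine ⟨2, ?_⟩
              rw [show (2:ℕ) = 1 + 1 from rfl, Function.iterate_succ_apply,
                Function.iterate_succ_apply, hpv, hpn, hq1]
              simp
            · obtain ⟨m, hm⟩ := ih k (by omega) (q (n-1)) (by omega) (by omega) hk
              refine ⟨m + 2, ?_⟩
              rw [show m + 2 = (m + 1) + 1 from rfl, Function.iterate_succ_apply, hpv,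
                Function.iterate_succ_apply, hpn]
              exact hm
          · have hqv := hb v hv2 (by omega)
            by_cases hc : q v = n - 1 ∧ v ∈ B₁
            · have hpv : expand n B₁ q v = n := by
                rw [expand_eq_of hv2 (by omega), if_neg (by omega), if_neg hveq, if_pos hc]
              have hpn : expand n B₁ q n = q (n - 1) := by
                rw [expand_eq_of (by omega) le_rfl, if_pos rfl]
              rw [hc.1] at hk
              match k with
              | 0 => simp at hk; omega
              | Nat.succ k =>
                rw [Function.iterate_succ_apply] at hk
                by_cases hq1 : q (n - 1) = 1
                · refine ⟨2, ?_⟩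
                  rw [show (2:ℕ) = 1 + 1 from rfl, Function.iterate_succ_apply,
                    Function.iterate_succ_apply, hpv, hpn, hq1]
                  simp
                · obtain ⟨m, hm⟩ := ih k (by omega) (q (n-1)) (by omega) (by omega) hk
                  refine ⟨m + 2, ?_⟩
                  rw [show m + 2 = (m + 1) + 1 from rfl, Function.iterate_succ_apply, hpv,
                    Function.iterate_succ_apply, hpn]
                  exact hm
            · have hpv : expand n B₁ q v = q v := by
                rw [expand_eq_of hv2 (by omega), if_neg (by omega), if_neg hveq, if_neg hc]
              by_cases hq1 : q v = 1
              · exact ⟨1, by simp [hpv, hq1]⟩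
              · obtain ⟨m, hm⟩ := ih k (by omega) (q v) (by omega) (by omega) hk
                exact ⟨m + 1, by rw [Function.iterate_succ_apply, hpv]; exact hm⟩
    intro v hv2 hv
    by_cases hvn : v = n
    · have hpn : expand n B₁ q n = q (n - 1) := by
        rw [expand_eq_of (by omega) le_rfl, if_pos rfl]
      rw [hvn]
      by_cases hq1 : q (n - 1) = 1
      · exact ⟨1, by simp [hpn, hq1]⟩
      · obtain ⟨k, hk⟩ := hr (n - 1) (by omega) le_rfl
        match k with
        | 0 => simp at hk; omega
        | Nat.succ k =>
          rw [Function.iterate_succ_apply] at hk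
          obtain ⟨m, hm⟩ := key k (q (n-1)) (by omega) (by omega) hk
          exact ⟨m + 1, by rw [Function.iterate_succ_apply, hpn]; exact hm⟩
    · obtain ⟨k, hk⟩ := hr v hv2 (by omega)
      exact key k v hv2 (by omega) hk

lemma contract_expand {n : ℕ} {B₁ : Finset ℕ} {q : ℕ → ℕ} (hn : 3 ≤ n)
    (ht : IsLabelledTree (n - 1) q) : contract n (expand n B₁ q) = q := by
  funext v
  by_cases hv : 2 ≤ v ∧ v ≤ n - 1
  · rw [contract_eq_of hv.1 hv.2]
    by_cases hveq : v = n - 1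
    · rw [if_pos hveq, expand_eq_of (by omega) le_rfl, if_pos rfl, hveq]
    · have hqv := ht.1 v hv.1 hv.2
      have hpv : expand n B₁ q v = if q v = n-1 ∧ v ∈ B₁ then n else q v := by
        rw [expand_eq_of hv.1 (by omega), if_neg (by omega), if_neg hveq]
      rw [if_neg hveq, hpv]
      by_cases hc : q v = n - 1 ∧ v ∈ B₁
      · rw [if_pos hc, if_pos rfl, hc.1]
      · rw [if_neg hc, if_neg (by omega)]
  · rw [contract_eq_self hv]
    exact (ht.2.2 v hv).symm

lemma expand_contract {n : ℕ} {B₁ : Finset ℕ} {p : ℕ → ℕ} (hn : 3 ≤ n)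
    (ht : IsLabelledTree n p) (h1 : p (n - 1) = n)
    (hB : ∀ v, 2 ≤ v → v ≤ n → (v ∈ B₁ ↔ head p v = n)) :
    expand n B₁ (contract n p) = p := by
  funext v
  by_cases hv : 2 ≤ v ∧ v ≤ n
  · rw [expand_eq_of hv.1 hv.2]
    by_cases hvn : v = n
    · rw [if_pos hvn, contract_eq_of (by omega) le_rfl, if_pos rfl, hvn]
    · rw [if_neg hvn]
      by_cases hveq : v = n - 1
      · rw [if_pos hveq, hveq, h1]
      · rw [if_neg hveq]
        have hpv := ht.1 v hv.1 hv.2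
        have hqv : contract n p v = if p v = n then n - 1 else p v := by
          rw [contract_eq_of hv.1 (by omega), if_neg hveq]
        by_cases hpvn : p v = n
        · have hc1 : contract n p v = n - 1 := by rw [hqv, if_pos hpvn]
          have hc2 : v ∈ B₁ := (hB v hv.1 hv.2).2 (by simp only [head, hpvn]; omega)
          rw [if_pos ⟨hc1, hc2⟩]
          exact hpvn.symm
        · have hvB : v ∉ B₁ := fun h => by
            have := (hB v hv.1 hv.2).1 h
            simp only [head] at this
            omega
          rw [if_neg (fun h => hvB h.2), hqv, if_neg hpvn]
  · rw [expand_eq_self hv, (ht.2.2 v hv)]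

/-- Let `n ≥ 2` and let `π = {B₁,…,B_k}` be a partition of `{2,…,n}` in which `n` and
`n-1` lie in the same block `B₁`.  For every labelled tree `T` on `[n]` with `φ(T) = π`
the vertices `n` and `n-1` are adjacent, and contracting the edge `{n-1,n}` (deleting the
label `n`) is a bijection from `φ⁻¹(π)` onto the (disjoint) union of the sets `φ⁻¹(π̃_j)`,
`j = 1,…,k`, of labelled trees on `[n-1]`, where `π̃₁ = {B₁∖{n}, B₂,…,B_k}` and, for
`j ≥ 2`, `π̃_j = {B₁ ∪ B_j ∖ {n}} ∪ {B_i : i ≠ 1, j}`. -/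
theorem contraction_bijection (n : ℕ) (hn : 2 ≤ n) (π : Finpartition (Finset.Icc 2 n))
    (B₁ : Finset ℕ) (hB₁ : B₁ ∈ π.parts) (hnB : n ∈ B₁) (hn1B : n - 1 ∈ B₁) :
    (∀ p : ℕ → ℕ, IsLabelledTree n p → phiEq n p π → (p (n - 1) = n ∨ p n = n - 1)) ∧
    Set.BijOn (contract n)
      {p : ℕ → ℕ | IsLabelledTree n p ∧ phiEq n p π}
      {q : ℕ → ℕ | IsLabelledTree (n - 1) q ∧
        ∃ ρ : Finpartition (Finset.Icc 2 (n - 1)), phiEq (n - 1) q ρ ∧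
          (ρ.parts = insert (B₁.erase n) (π.parts.erase B₁) ∨
            ∃ Bj ∈ π.parts, Bj ≠ B₁ ∧
              ρ.parts = insert ((B₁ ∪ Bj).erase n) ((π.parts.erase B₁).erase Bj))} := by
  have hn3 : 3 ≤ n := by
    have h := Finset.mem_Icc.1 (π.le hB₁ hn1B)
    omega
  have hB₁sub : B₁ ⊆ Finset.Icc 2 n := π.le hB₁
  have hfirst : ∀ p, IsLabelledTree n p → phiEq n p π → p (n - 1) = n :=
    fun p ht hφ => parent_n1 hB₁ hnB hn1B hn3 ht hφ
  have hBiff : ∀ p : ℕ → ℕ, IsLabelledTree n p → phiEq n p π →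
      ∀ v, 2 ≤ v → v ≤ n → (v ∈ B₁ ↔ head p v = n) := by
    intro p ht hφ v hv2 hvn
    rw [fib_of_phiEq hφ hB₁ hnB (Finset.mem_Icc.2 ⟨hv2, hvn⟩), head_n (by omega) ht]
  have hnotn : ∀ b ∈ π.parts, b ≠ B₁ → ∀ x ∈ b, 2 ≤ x ∧ x ≤ n - 1 := by
    intro b hb hbne x hx
    have hxI := Finset.mem_Icc.1 (π.le hb hx)
    have : x ≠ n := fun h => hbne (π.eq_of_mem_parts hb hB₁ hx (by rw [h]; exact hnB))
    omega
  refine ⟨fun p ht hφ => Or.inl (hfirst p ht hφ), ?_, ?_, ?_⟩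
  · -- MapsTo
    rintro p ⟨ht, hφ⟩
    have h1 := hfirst p ht hφ
    have h2 := no2cycle hn3 ht h1
    have hpn := ht.1 n (by omega) le_rfl
    have hB := hBiff p ht hφ
    have hq := fun {v : ℕ} (hv2 : 2 ≤ v) (hv1 : v ≤ n - 1) =>
      head_contract hn3 ht h1 h2 hv2 hv1
    refine ⟨contract_tree hn3 ht h1 h2, ?_⟩
    by_cases hex : ∃ v₀ ∈ Finset.Icc 2 n, head p v₀ = n - 1
    · -- case B : merged block
      obtain ⟨v₀, hv₀, hh⟩ := hex
      obtain ⟨Bj, hBj, hv₀Bj⟩ := π.exists_mem hv₀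
      rw [Finset.mem_Icc] at hv₀
      have hBjne : Bj ≠ B₁ := by
        intro hEq
        have := (hB v₀ hv₀.1 hv₀.2).1 (hEq ▸ hv₀Bj)
        omega
      have hBjiff : ∀ v, 2 ≤ v → v ≤ n → (v ∈ Bj ↔ head p v = n - 1) := by
        intro v hv2 hvn
        rw [fib_of_phiEq hφ hBj hv₀Bj (Finset.mem_Icc.2 ⟨hv2, hvn⟩), hh]
      set X := (B₁ ∪ Bj).erase n with hXdef
      set P := insert X ((π.parts.erase B₁).erase Bj) with hPdef
      have hnotU : ∀ v, 2 ≤ v → v ≤ n - 1 → v ∉ B₁ ∪ Bj →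
          head p v ≠ n - 1 ∧ head p v ≠ n := by
        intro v hv2 hv1 hc
        constructor
        · intro h'
          exact hc (Finset.mem_union_right _ ((hBjiff v hv2 (by omega)).2 h'))
        · intro h'
          exact hc (Finset.mem_union_left _ ((hB v hv2 (by omega)).2 h'))
      have hqval : ∀ v, 2 ≤ v → v ≤ n - 1 →
          head (contract n p) v = if v ∈ B₁ ∪ Bj then n - 1 else head p v := by
        intro v hv2 hv1
        rw [hq hv2 hv1]
        by_cases hvu : v ∈ B₁ ∪ Bj
        · rw [if_pos hvu]
          rcases Finset.mem_union.1 hvu with h | h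
          · rw [if_pos ((hB v hv2 (by omega)).1 h)]
          · have := (hBjiff v hv2 (by omega)).1 h
            rw [if_neg (by omega)]
            exact this
        · rw [if_neg hvu]
          have := hnotU v hv2 hv1 hvu
          rw [if_neg this.2]
      have hne : ∀ b ∈ P, b.Nonempty := by
        intro b hb
        rcases Finset.mem_insert.1 hb with h | h
        · subst h
          exact ⟨n - 1, Finset.mem_erase.2 ⟨by omega, Finset.mem_union_left _ hn1B⟩⟩
        · exact π.nonempty_of_mem_parts (Finset.mem_of_mem_erase (Finset.mem_of_mem_erase h))
      have hsup : P.sup id = Finset.Icc 2 (n - 1) := by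
        ext x
        rw [Finset.mem_sup, Finset.mem_Icc]
        constructor
        · rintro ⟨b, hb, hx⟩
          rcases Finset.mem_insert.1 hb with h | h
          · subst h
            obtain ⟨hxn, hxU⟩ := Finset.mem_erase.1 hx
            rcases Finset.mem_union.1 hxU with h' | h'
            · have := Finset.mem_Icc.1 (hB₁sub h'); omega
            · have := Finset.mem_Icc.1 (π.le hBj h'); omega
          · exact hnotn b (Finset.mem_of_mem_erase (Finset.mem_of_mem_erase h))
              (Finset.ne_of_mem_erase (Finset.mem_of_mem_erase h)) x hx
        · intro hx
          obtain ⟨b, hb, hxb⟩ := π.exists_mem (Finset.mem_Icc.2 ⟨hx.1, by omega⟩)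
          by_cases hbe : b = B₁
          · exact ⟨X, Finset.mem_insert_self _ _,
              Finset.mem_erase.2 ⟨by omega, Finset.mem_union_left _ (hbe ▸ hxb)⟩⟩
          · by_cases hbj : b = Bj
            · exact ⟨X, Finset.mem_insert_self _ _,
                Finset.mem_erase.2 ⟨by omega, Finset.mem_union_right _ (hbj ▸ hxb)⟩⟩
            · exact ⟨b, Finset.mem_insert_of_mem (Finset.mem_erase.2 ⟨hbj,
                Finset.mem_erase.2 ⟨hbe, hb⟩⟩), hxb⟩
      have hfib : ∀ b ∈ P, ∀ u ∈ b, ∀ v ∈ Finset.Icc 2 (n - 1),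
          (v ∈ b ↔ head (contract n p) v = head (contract n p) u) := by
        intro b hb u hu v hv
        rw [Finset.mem_Icc] at hv
        rcases Finset.mem_insert.1 hb with h | h
        · subst h
          obtain ⟨hun, huU⟩ := Finset.mem_erase.1 hu
          have huI : 2 ≤ u ∧ u ≤ n - 1 := by
            rcases Finset.mem_union.1 huU with h' | h'
            · have := Finset.mem_Icc.1 (hB₁sub h'); omega
            · have := Finset.mem_Icc.1 (π.le hBj h'); omega
          rw [hqval v hv.1 hv.2, hqval u huI.1 huI.2, if_pos huU]
          constructor
          · intro hvb
            rw [if_pos (Finset.mem_erase.1 hvb).2]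
          · intro hh'
            by_cases hc : v ∈ B₁ ∪ Bj
            · exact Finset.mem_erase.2 ⟨by omega, hc⟩
            · rw [if_neg hc] at hh'
              have := hnotU v hv.1 hv.2 hc
              omega
        · have hbπ := Finset.mem_of_mem_erase (Finset.mem_of_mem_erase h)
          have hbBj : b ≠ Bj := Finset.ne_of_mem_erase h
          have hbB₁ : b ≠ B₁ := Finset.ne_of_mem_erase (Finset.mem_of_mem_erase h)
          have huI := hnotn b hbπ hbB₁ u hu
          have huU : u ∉ B₁ ∪ Bj := by
            intro hc
            rcases Finset.mem_union.1 hc with h' | h'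
            · exact hbB₁ (π.eq_of_mem_parts hbπ hB₁ hu h')
            · exact hbBj (π.eq_of_mem_parts hbπ hBj hu h')
          have hu2 := hnotU u huI.1 huI.2 huU
          rw [hqval v hv.1 hv.2, hqval u huI.1 huI.2, if_neg huU,
            fib_of_phiEq hφ hbπ hu (Finset.mem_Icc.2 ⟨hv.1, by omega⟩)]
          by_cases hc : v ∈ B₁ ∪ Bj
          · rw [if_pos hc]
            have hcv : head p v = n ∨ head p v = n - 1 := by
              rcases Finset.mem_union.1 hc with h' | h'
              · exact Or.inl ((hB v hv.1 (by omega)).1 h')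
              · exact Or.inr ((hBjiff v hv.1 (by omega)).1 h')
            constructor <;> intro h' <;> omega
          · rw [if_neg hc]
      obtain ⟨ρ, hρ⟩ := build P (head (contract n p)) hne hsup hfib
      exact ⟨ρ, phiEq_of_fib (by rw [hρ]; exact hfib), Or.inr ⟨Bj, hBj, hBjne, hρ⟩⟩
    · -- case A : no vertex with head = n - 1
      push_neg at hex
      set P := insert (B₁.erase n) (π.parts.erase B₁) with hPdef
      have hne : ∀ b ∈ P, b.Nonempty := by
        intro b hb
        rcases Finset.mem_insert.1 hb with h | h
        · subst h
          exact ⟨n - 1, Finset.mem_erase.2 ⟨by omega, hn1B⟩⟩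
        · exact π.nonempty_of_mem_parts (Finset.mem_of_mem_erase h)
      have hsup : P.sup id = Finset.Icc 2 (n - 1) := by
        ext x
        rw [Finset.mem_sup, Finset.mem_Icc]
        constructor
        · rintro ⟨b, hb, hx⟩
          rcases Finset.mem_insert.1 hb with h | h
          · subst h
            obtain ⟨hxn, hxB⟩ := Finset.mem_erase.1 hx
            have := Finset.mem_Icc.1 (hB₁sub hxB)
            omega
          · exact hnotn b (Finset.mem_of_mem_erase h) (Finset.ne_of_mem_erase h) x hx
        · intro hx
          obtain ⟨b, hb, hxb⟩ := π.exists_mem (Finset.mem_Icc.2 ⟨hx.1, by omega⟩)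
          by_cases hbe : b = B₁
          · exact ⟨B₁.erase n, Finset.mem_insert_self _ _,
              Finset.mem_erase.2 ⟨by omega, hbe ▸ hxb⟩⟩
          · exact ⟨b, Finset.mem_insert_of_mem (Finset.mem_erase.2 ⟨hbe, hb⟩), hxb⟩
      have hfib : ∀ b ∈ P, ∀ u ∈ b, ∀ v ∈ Finset.Icc 2 (n - 1),
          (v ∈ b ↔ head (contract n p) v = head (contract n p) u) := by
        intro b hb u hu v hv
        rw [Finset.mem_Icc] at hv
        have hexv := hex v (Finset.mem_Icc.2 ⟨hv.1, by omega⟩)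
        rcases Finset.mem_insert.1 hb with h | h
        · subst h
          obtain ⟨hun, huB⟩ := Finset.mem_erase.1 hu
          have huI := Finset.mem_Icc.1 (hB₁sub huB)
          have hhu : head p u = n := (hB u huI.1 huI.2).1 huB
          rw [hq hv.1 hv.2, hq huI.1 (by omega), hhu, if_pos rfl]
          constructor
          · intro hvb
            rw [if_pos ((hB v hv.1 (by omega)).1 (Finset.mem_erase.1 hvb).2)]
          · intro hh'
            by_cases hc : head p v = n
            · exact Finset.mem_erase.2 ⟨by omega, (hB v hv.1 (by omega)).2 hc⟩
            · rw [if_neg hc] at hh'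
              omega
        · have hbπ := Finset.mem_of_mem_erase h
          have hbne := Finset.ne_of_mem_erase h
          have huI := hnotn _ hbπ hbne u hu
          have hexu := hex u (Finset.mem_Icc.2 ⟨huI.1, by omega⟩)
          have hhu : head p u ≠ n := by
            intro hc
            exact hbne (π.eq_of_mem_parts hbπ hB₁ hu ((hB u huI.1 (by omega)).2 hc))
          rw [hq hv.1 hv.2, hq huI.1 huI.2, if_neg hhu,
            fib_of_phiEq hφ hbπ hu (Finset.mem_Icc.2 ⟨hv.1, by omega⟩)]
          by_cases hc : head p v = n
          · rw [if_pos hc]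
            constructor <;> intro h' <;> omega
          · rw [if_neg hc]
      obtain ⟨ρ, hρ⟩ := build P (head (contract n p)) hne hsup hfib
      exact ⟨ρ, phiEq_of_fib (by rw [hρ]; exact hfib), Or.inl hρ⟩
  · -- InjOn
    rintro p₁ ⟨ht₁, hφ₁⟩ p₂ ⟨ht₂, hφ₂⟩ heq
    calc p₁ = expand n B₁ (contract n p₁) :=
        (expand_contract hn3 ht₁ (hfirst p₁ ht₁ hφ₁) (hBiff p₁ ht₁ hφ₁)).symm
    _ = expand n B₁ (contract n p₂) := by rw [heq]
    _ = p₂ := expand_contract hn3 ht₂ (hfirst p₂ ht₂ hφ₂) (hBiff p₂ ht₂ hφ₂)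
  · -- SurjOn
    rintro q ⟨htq, ρ, hφρ, hcases⟩
    have hqb := htq.1
    have hqn1 := hqb (n - 1) (by omega) le_rfl
    have hheadqn1 : head q (n - 1) = n - 1 := by simp only [head]; omega
    have hXmem : ∀ v, 2 ≤ v → v ≤ n → v ≠ n → v ∈ B₁ → head q v = n - 1 := by
      intro v hv2 hvn hvne hvB
      have hvI : v ∈ Finset.Icc 2 (n - 1) := Finset.mem_Icc.2 ⟨hv2, by omega⟩
      rcases hcases with h | ⟨Bj, hBj, hBjne, h⟩
      · have hX : B₁.erase n ∈ ρ.parts := by rw [h]; exact Finset.mem_insert_self _ _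
        have := (fib_of_phiEq hφρ hX (Finset.mem_erase.2 ⟨by omega, hn1B⟩) hvI).1
          (Finset.mem_erase.2 ⟨hvne, hvB⟩)
        rwa [hheadqn1] at this
      · have hX : (B₁ ∪ Bj).erase n ∈ ρ.parts := by
          rw [h]; exact Finset.mem_insert_self _ _
        have := (fib_of_phiEq hφρ hX
          (Finset.mem_erase.2 ⟨by omega, Finset.mem_union_left _ hn1B⟩) hvI).1
          (Finset.mem_erase.2 ⟨hvne, Finset.mem_union_left _ hvB⟩)
        rwa [hheadqn1] at this
    have hq_v : ∀ v, 2 ≤ v → v ≤ n - 2 → v ∈ B₁ → q v = n - 1 := by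
      intro v hv2 hvn hvB
      have := hXmem v hv2 (by omega) (by omega) hvB
      simp only [head] at this
      omega
    set p := expand n B₁ q with hpdef
    have htp : IsLabelledTree n p := expand_tree hn3 htq
    have hhp : ∀ v, 2 ≤ v → v ≤ n → head p v = if v ∈ B₁ then n else head q v := by
      intro v hv2 hvn
      by_cases hveqn : v = n
      · rw [if_pos (by rw [hveqn]; exact hnB)]
        have hpv : p v = q (n - 1) := by
          rw [hpdef, expand_eq_of hv2 hvn, if_pos hveqn]
        simp only [head, hpv]
        omega
      · by_cases hveq1 : v = n - 1
        · rw [if_pos (by rw [hveq1]; exact hn1B)]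
          have hpv : p v = n := by
            rw [hpdef, expand_eq_of hv2 hvn, if_neg hveqn, if_pos hveq1]
          simp only [head, hpv]
          omega
        · by_cases hvB : v ∈ B₁
          · rw [if_pos hvB]
            have hqv := hq_v v hv2 (by omega) hvB
            have hpv : p v = n := by
              rw [hpdef, expand_eq_of hv2 hvn, if_neg hveqn, if_neg hveq1, if_pos ⟨hqv, hvB⟩]
            simp only [head, hpv]
            omega
          · rw [if_neg hvB]
            have hpv : p v = q v := by
              rw [hpdef, expand_eq_of hv2 hvn, if_neg hveqn, if_neg hveq1,
                if_neg (fun hc => hvB hc.2)]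
            simp only [head, hpv]
    have hheadqle : ∀ v, 2 ≤ v → v ≤ n - 1 → head q v ≤ n - 1 := by
      intro v hv2 hv1
      have := hqb v hv2 hv1
      simp only [head]
      omega
    refine ⟨p, ⟨htp, ?_⟩, contract_expand hn3 htq⟩
    intro v hv w hw
    rw [Finset.mem_Icc] at hv hw
    by_cases hvB : v ∈ B₁ <;> by_cases hwB : w ∈ B₁
    · constructor
      · intro _
        rw [hhp v hv.1 hv.2, hhp w hw.1 hw.2, if_pos hvB, if_pos hwB]
      · intro _
        exact ⟨B₁, hB₁, hvB, hwB⟩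
    · have hwn : w ≠ n := fun h => hwB (h ▸ hnB)
      have hle := hheadqle w hw.1 (by omega)
      rw [hhp v hv.1 hv.2, hhp w hw.1 hw.2, if_pos hvB, if_neg hwB]
      constructor
      · rintro ⟨b, hb, hvb, hwb⟩
        exact absurd (π.eq_of_mem_parts hb hB₁ hvb hvB ▸ hwb) hwB
      · intro h'
        omega
    · have hvn : v ≠ n := fun h => hvB (h ▸ hnB)
      have hle := hheadqle v hv.1 (by omega)
      rw [hhp v hv.1 hv.2, hhp w hw.1 hw.2, if_neg hvB, if_pos hwB]
      constructor
      · rintro ⟨b, hb, hvb, hwb⟩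
        exact absurd (π.eq_of_mem_parts hb hB₁ hwb hwB ▸ hvb) hvB
      · intro h'
        omega
    · have hvn : v ≠ n := fun h => hvB (h ▸ hnB)
      have hwn : w ≠ n := fun h => hwB (h ▸ hnB)
      have hvI : v ∈ Finset.Icc 2 (n - 1) := Finset.mem_Icc.2 ⟨hv.1, by omega⟩
      have hwI : w ∈ Finset.Icc 2 (n - 1) := Finset.mem_Icc.2 ⟨hw.1, by omega⟩
      rw [hhp v hv.1 hv.2, hhp w hw.1 hw.2, if_neg hvB, if_neg hwB, ← hφρ v hvI w hwI]
      rcases hcases with h | ⟨Bj, hBj, hBjne, h⟩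
      · constructor
        · rintro ⟨b, hb, hvb, hwb⟩
          refine ⟨b, ?_, hvb, hwb⟩
          rw [h]
          exact Finset.mem_insert_of_mem (Finset.mem_erase.2
            ⟨fun he => hvB (he ▸ hvb), hb⟩)
        · rintro ⟨b, hb, hvb, hwb⟩
          rw [h] at hb
          rcases Finset.mem_insert.1 hb with h' | h'
          · exact absurd (Finset.mem_of_mem_erase (h' ▸ hvb)) hvB
          · exact ⟨b, Finset.mem_of_mem_erase h', hvb, hwb⟩
      · constructor
        · rintro ⟨b, hb, hvb, hwb⟩
          by_cases hbj : b = Bj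
          · refine ⟨(B₁ ∪ Bj).erase n, by rw [h]; exact Finset.mem_insert_self _ _,
              Finset.mem_erase.2 ⟨hvn, Finset.mem_union_right _ (hbj ▸ hvb)⟩,
              Finset.mem_erase.2 ⟨hwn, Finset.mem_union_right _ (hbj ▸ hwb)⟩⟩
          · refine ⟨b, ?_, hvb, hwb⟩
            rw [h]
            exact Finset.mem_insert_of_mem (Finset.mem_erase.2 ⟨hbj,
              Finset.mem_erase.2 ⟨fun he => hvB (he ▸ hvb), hb⟩⟩)
        · rintro ⟨b, hb, hvb, hwb⟩
          rw [h] at hb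
          rcases Finset.mem_insert.1 hb with h' | h'
          · subst h'
            have hvBj : v ∈ Bj := by
              rcases Finset.mem_union.1 (Finset.mem_of_mem_erase hvb) with hh | hh
              · exact absurd hh hvB
              · exact hh
            have hwBj : w ∈ Bj := by
              rcases Finset.mem_union.1 (Finset.mem_of_mem_erase hwb) with hh | hh
              · exact absurd hh hwB
              · exact hh
            exact ⟨Bj, hBj, hvBj, hwBj⟩
          · exact ⟨b, Finset.mem_of_mem_erase (Finset.mem_of_mem_erase h'), hvb, hwb⟩
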